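/- arXiv:2212.06426 — 5 statements merged into one kernel-verified Lean document; each statement's English description precedes it below -/
import Mathlib

section
/- Every ℝ-linear derivation of the real quaternions is inner by a unique purely imaginary quaternion: if D : ℍ → ℍ is ℝ-linear and satisfies D(xy) = D(x)·y + x·D(y) for all x, y ∈ ℍ, then there exists a unique quaternion q ∈ ℍ with real part zero such that D(x) = q·x − x·q for all x ∈ ℍ. -/
/-- Every ℝ-linear derivation of the quaternions is inner by a unique purely
imaginary quaternion. -/
theorem derivation_quaternion_inner (D : Quaternion ℝ →ₗ[ℝ] Quaternion ℝ)
    (hD : ∀ x y : Quaternion ℝ, D (x * y) = D x * y + x * D y) :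
    ∃! q : Quaternion ℝ, q.re = 0 ∧ ∀ x : Quaternion ℝ, D x = q * x - x * q := by
  set i : Quaternion ℝ := ⟨0,1,0,0⟩ with hi
  set j : Quaternion ℝ := ⟨0,0,1,0⟩ with hj
  set k : Quaternion ℝ := ⟨0,0,0,1⟩ with hk
  have hD1 : D 1 = 0 := by
    have h := hD 1 1
    simp only [one_mul, mul_one] at h
    exact left_eq_add.mp h
  have hii : i * i = (-1 : Quaternion ℝ) := by
    apply Quaternion.ext <;> simp only [Quaternion.re_mul, Quaternion.imI_mul, Quaternion.imJ_mul, Quaternion.imK_mul, Quaternion.re_add, Quaternion.imI_add, Quaternion.imJ_add, Quaternion.imK_add, Quaternion.re_sub, Quaternion.imI_sub, Quaternion.imJ_sub, Quaternion.imK_sub, Quaternion.re_neg, Quaternion.imI_neg, Quaternion.imJ_neg, Quaternion.imK_neg] <;> simp [hi, Quaternion.re_one, Quaternion.imI_one, Quaternion.imJ_one, Quaternion.imK_one, Quaternion.re_zero, Quaternion.imI_zero, Quaternion.imJ_zero, Quaternion.imK_zero]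
  have hjj : j * j = (-1 : Quaternion ℝ) := by
    apply Quaternion.ext <;> simp only [Quaternion.re_mul, Quaternion.imI_mul, Quaternion.imJ_mul, Quaternion.imK_mul, Quaternion.re_add, Quaternion.imI_add, Quaternion.imJ_add, Quaternion.imK_add, Quaternion.re_sub, Quaternion.imI_sub, Quaternion.imJ_sub, Quaternion.imK_sub, Quaternion.re_neg, Quaternion.imI_neg, Quaternion.imJ_neg, Quaternion.imK_neg] <;> simp [hj, Quaternion.re_one, Quaternion.imI_one, Quaternion.imJ_one, Quaternion.imK_one, Quaternion.re_zero, Quaternion.imI_zero, Quaternion.imJ_zero, Quaternion.imK_zero]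
  have hij : i * j = k := by
    apply Quaternion.ext <;> simp only [Quaternion.re_mul, Quaternion.imI_mul, Quaternion.imJ_mul, Quaternion.imK_mul, Quaternion.re_add, Quaternion.imI_add, Quaternion.imJ_add, Quaternion.imK_add, Quaternion.re_sub, Quaternion.imI_sub, Quaternion.imJ_sub, Quaternion.imK_sub, Quaternion.re_neg, Quaternion.imI_neg, Quaternion.imJ_neg, Quaternion.imK_neg] <;> simp [hi, hj, hk, Quaternion.re_one, Quaternion.imI_one, Quaternion.imJ_one, Quaternion.imK_one, Quaternion.re_zero, Quaternion.imI_zero, Quaternion.imJ_zero, Quaternion.imK_zero]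
  have hji : j * i = -k := by
    apply Quaternion.ext <;> simp only [Quaternion.re_mul, Quaternion.imI_mul, Quaternion.imJ_mul, Quaternion.imK_mul, Quaternion.re_add, Quaternion.imI_add, Quaternion.imJ_add, Quaternion.imK_add, Quaternion.re_sub, Quaternion.imI_sub, Quaternion.imJ_sub, Quaternion.imK_sub, Quaternion.re_neg, Quaternion.imI_neg, Quaternion.imJ_neg, Quaternion.imK_neg] <;> simp [hi, hj, hk, Quaternion.re_one, Quaternion.imI_one, Quaternion.imJ_one, Quaternion.imK_one, Quaternion.re_zero, Quaternion.imI_zero, Quaternion.imJ_zero, Quaternion.imK_zero]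
  have hDneg1 : D (-1) = 0 := by rw [map_neg, hD1, neg_zero]
  have hA : D i * i + i * D i = 0 := by
    have h := hD i i; rw [hii, hDneg1] at h; exact h.symm
  have hB : D j * j + j * D j = 0 := by
    have h := hD j j; rw [hjj, hDneg1] at h; exact h.symm
  have hC : D i * j + i * D j + (D j * i + j * D i) = 0 := by
    have h0 : D (i * j) + D (j * i) = 0 := by
      rw [hij, hji, map_neg, add_neg_cancel]
    rw [hD i j, hD j i] at h0
    exact h0
  -- extract coordinate facts
  have hAre : (D i).re = 0 := by
    have := congrArg QuaternionAlgebra.imI hA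
    simp only [Quaternion.re_mul, Quaternion.imI_mul, Quaternion.imJ_mul, Quaternion.imK_mul, Quaternion.re_add, Quaternion.imI_add, Quaternion.imJ_add, Quaternion.imK_add, Quaternion.re_sub, Quaternion.imI_sub, Quaternion.imJ_sub, Quaternion.imK_sub, Quaternion.re_neg, Quaternion.imI_neg, Quaternion.imJ_neg, Quaternion.imK_neg] at this; simp [hi, Quaternion.re_one, Quaternion.imI_one, Quaternion.imJ_one, Quaternion.imK_one, Quaternion.re_zero, Quaternion.imI_zero, Quaternion.imJ_zero, Quaternion.imK_zero] at this; linarith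
  have hAimI : (D i).imI = 0 := by
    have := congrArg QuaternionAlgebra.re hA
    simp only [Quaternion.re_mul, Quaternion.imI_mul, Quaternion.imJ_mul, Quaternion.imK_mul, Quaternion.re_add, Quaternion.imI_add, Quaternion.imJ_add, Quaternion.imK_add, Quaternion.re_sub, Quaternion.imI_sub, Quaternion.imJ_sub, Quaternion.imK_sub, Quaternion.re_neg, Quaternion.imI_neg, Quaternion.imJ_neg, Quaternion.imK_neg] at this; simp [hi, Quaternion.re_one, Quaternion.imI_one, Quaternion.imJ_one, Quaternion.imK_one, Quaternion.re_zero, Quaternion.imI_zero, Quaternion.imJ_zero, Quaternion.imK_zero] at this; linarith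
  have hBre : (D j).re = 0 := by
    have := congrArg QuaternionAlgebra.imJ hB
    simp only [Quaternion.re_mul, Quaternion.imI_mul, Quaternion.imJ_mul, Quaternion.imK_mul, Quaternion.re_add, Quaternion.imI_add, Quaternion.imJ_add, Quaternion.imK_add, Quaternion.re_sub, Quaternion.imI_sub, Quaternion.imJ_sub, Quaternion.imK_sub, Quaternion.re_neg, Quaternion.imI_neg, Quaternion.imJ_neg, Quaternion.imK_neg] at this; simp [hj, Quaternion.re_one, Quaternion.imI_one, Quaternion.imJ_one, Quaternion.imK_one, Quaternion.re_zero, Quaternion.imI_zero, Quaternion.imJ_zero, Quaternion.imK_zero] at this; linarith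
  have hBimJ : (D j).imJ = 0 := by
    have := congrArg QuaternionAlgebra.re hB
    simp only [Quaternion.re_mul, Quaternion.imI_mul, Quaternion.imJ_mul, Quaternion.imK_mul, Quaternion.re_add, Quaternion.imI_add, Quaternion.imJ_add, Quaternion.imK_add, Quaternion.re_sub, Quaternion.imI_sub, Quaternion.imJ_sub, Quaternion.imK_sub, Quaternion.re_neg, Quaternion.imI_neg, Quaternion.imJ_neg, Quaternion.imK_neg] at this; simp [hj, Quaternion.re_one, Quaternion.imI_one, Quaternion.imJ_one, Quaternion.imK_one, Quaternion.re_zero, Quaternion.imI_zero, Quaternion.imJ_zero, Quaternion.imK_zero] at this; linarith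
  have hCrel : (D j).imI = -(D i).imJ := by
    have := congrArg QuaternionAlgebra.re hC
    simp only [Quaternion.re_mul, Quaternion.imI_mul, Quaternion.imJ_mul, Quaternion.imK_mul, Quaternion.re_add, Quaternion.imI_add, Quaternion.imJ_add, Quaternion.imK_add, Quaternion.re_sub, Quaternion.imI_sub, Quaternion.imJ_sub, Quaternion.imK_sub, Quaternion.re_neg, Quaternion.imI_neg, Quaternion.imJ_neg, Quaternion.imK_neg] at this; simp [hi, hj, Quaternion.re_one, Quaternion.imI_one, Quaternion.imJ_one, Quaternion.imK_one, Quaternion.re_zero, Quaternion.imI_zero, Quaternion.imJ_zero, Quaternion.imK_zero] at this; linarith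
  refine ⟨⟨0, (D j).imK / 2, -(D i).imK / 2, (D i).imJ / 2⟩, ⟨rfl, ?_⟩, ?_⟩
  · set q : Quaternion ℝ := ⟨0, (D j).imK / 2, -(D i).imK / 2, (D i).imJ / 2⟩ with hq
    have hqi : D i = q * i - i * q := by
      apply Quaternion.ext <;>
        simp only [Quaternion.re_mul, Quaternion.imI_mul, Quaternion.imJ_mul, Quaternion.imK_mul, Quaternion.re_add, Quaternion.imI_add, Quaternion.imJ_add, Quaternion.imK_add, Quaternion.re_sub, Quaternion.imI_sub, Quaternion.imJ_sub, Quaternion.imK_sub, Quaternion.re_neg, Quaternion.imI_neg, Quaternion.imJ_neg, Quaternion.imK_neg, hAre, hAimI] <;> simp [hq, hi, Quaternion.re_one, Quaternion.imI_one, Quaternion.imJ_one, Quaternion.imK_one, Quaternion.re_zero, Quaternion.imI_zero, Quaternion.imJ_zero, Quaternion.imK_zero] <;> ring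
    have hqj : D j = q * j - j * q := by
      apply Quaternion.ext <;>
        simp only [Quaternion.re_mul, Quaternion.imI_mul, Quaternion.imJ_mul, Quaternion.imK_mul, Quaternion.re_add, Quaternion.imI_add, Quaternion.imJ_add, Quaternion.imK_add, Quaternion.re_sub, Quaternion.imI_sub, Quaternion.imJ_sub, Quaternion.imK_sub, Quaternion.re_neg, Quaternion.imI_neg, Quaternion.imJ_neg, Quaternion.imK_neg, hBre, hBimJ, hCrel] <;> simp [hq, hj, Quaternion.re_one, Quaternion.imI_one, Quaternion.imJ_one, Quaternion.imK_one, Quaternion.re_zero, Quaternion.imI_zero, Quaternion.imJ_zero, Quaternion.imK_zero] <;> ring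
    have hqk : D k = q * k - k * q := by
      have := hD i j
      rw [hij] at this
      rw [this, hqi, hqj, ← hij]
      noncomm_ring
    have hq1 : D 1 = q * 1 - 1 * q := by rw [hD1, mul_one, one_mul, sub_self]
    clear_value q
    clear hq
    intro x
    have hx : x = x.re • (1:Quaternion ℝ) + x.imI • i + x.imJ • j + x.imK • k := by
      apply Quaternion.ext <;> simp only [Quaternion.re_mul, Quaternion.imI_mul, Quaternion.imJ_mul, Quaternion.imK_mul, Quaternion.re_add, Quaternion.imI_add, Quaternion.imJ_add, Quaternion.imK_add, Quaternion.re_sub, Quaternion.imI_sub, Quaternion.imJ_sub, Quaternion.imK_sub, Quaternion.re_neg, Quaternion.imI_neg, Quaternion.imJ_neg, Quaternion.imK_neg, Quaternion.re_smul, Quaternion.imI_smul, Quaternion.imJ_smul, Quaternion.imK_smul] <;> simp [hi, hj, hk, Quaternion.re_one, Quaternion.imI_one, Quaternion.imJ_one, Quaternion.imK_one, Quaternion.re_zero, Quaternion.imI_zero, Quaternion.imJ_zero, Quaternion.imK_zero]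
    rw [hx]
    simp only [map_add, map_smul, hq1, hqi, hqj, hqk, mul_add, add_mul,
      mul_smul_comm, smul_mul_assoc, smul_sub]
    abel
  · rintro p ⟨hpre, hp⟩
    have c1 : (D i).imJ = 2 * p.imK := by
      rw [hp i]; simp only [Quaternion.re_mul, Quaternion.imI_mul, Quaternion.imJ_mul, Quaternion.imK_mul, Quaternion.re_add, Quaternion.imI_add, Quaternion.imJ_add, Quaternion.imK_add, Quaternion.re_sub, Quaternion.imI_sub, Quaternion.imJ_sub, Quaternion.imK_sub, Quaternion.re_neg, Quaternion.imI_neg, Quaternion.imJ_neg, Quaternion.imK_neg]; simp [hi, hpre, Quaternion.re_one, Quaternion.imI_one, Quaternion.imJ_one, Quaternion.imK_one, Quaternion.re_zero, Quaternion.imI_zero, Quaternion.imJ_zero, Quaternion.imK_zero]; ring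
    have c2 : (D i).imK = -(2 * p.imJ) := by
      rw [hp i]; simp only [Quaternion.re_mul, Quaternion.imI_mul, Quaternion.imJ_mul, Quaternion.imK_mul, Quaternion.re_add, Quaternion.imI_add, Quaternion.imJ_add, Quaternion.imK_add, Quaternion.re_sub, Quaternion.imI_sub, Quaternion.imJ_sub, Quaternion.imK_sub, Quaternion.re_neg, Quaternion.imI_neg, Quaternion.imJ_neg, Quaternion.imK_neg]; simp [hi, hpre, Quaternion.re_one, Quaternion.imI_one, Quaternion.imJ_one, Quaternion.imK_one, Quaternion.re_zero, Quaternion.imI_zero, Quaternion.imJ_zero, Quaternion.imK_zero]; ring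
    have c3 : (D j).imK = 2 * p.imI := by
      rw [hp j]; simp only [Quaternion.re_mul, Quaternion.imI_mul, Quaternion.imJ_mul, Quaternion.imK_mul, Quaternion.re_add, Quaternion.imI_add, Quaternion.imJ_add, Quaternion.imK_add, Quaternion.re_sub, Quaternion.imI_sub, Quaternion.imJ_sub, Quaternion.imK_sub, Quaternion.re_neg, Quaternion.imI_neg, Quaternion.imJ_neg, Quaternion.imK_neg]; simp [hj, hpre, Quaternion.re_one, Quaternion.imI_one, Quaternion.imJ_one, Quaternion.imK_one, Quaternion.re_zero, Quaternion.imI_zero, Quaternion.imJ_zero, Quaternion.imK_zero]; ring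
    apply Quaternion.ext
    · exact hpre
    · show p.imI = (D j).imK / 2
      linarith
    · show p.imJ = -(D i).imK / 2
      linarith
    · show p.imK = (D i).imJ / 2
      linarith
end

section
/- The real Lie algebra of ℝ-linear derivations of the split quaternions — the real quaternion algebra with generators i, j satisfying i² = 1, j² = −1, ij = −ji — is isomorphic, as a Lie algebra over ℝ, to sl(2, ℝ), the Lie algebra of traceless 2×2 real matrices with the matrix commutator. -/
attribute [local instance 100] LieRing.ofAssociativeRing

/-- The ℝ-linear derivations of an ℝ-algebra `A`, as a Lie subalgebra of
`Module.End ℝ A` (with bracket the commutator of endomorphisms). -/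
def algebraDerivations (A : Type*) [Ring A] [Algebra ℝ A] :
    LieSubalgebra ℝ (Module.End ℝ A) where
  carrier := {D | ∀ x y : A, D (x * y) = D x * y + x * D y}
  add_mem' := by
    intro D E hD hE
    replace hD : ∀ x y : A, D (x * y) = D x * y + x * D y := hD
    replace hE : ∀ x y : A, E (x * y) = E x * y + x * E y := hE
    intro x y
    simp only [LinearMap.add_apply, hD, hE, add_mul, mul_add]
    abel
  zero_mem' := by
    intro x y
    simp
  smul_mem' := by
    intro t D hD
    replace hD : ∀ x y : A, D (x * y) = D x * y + x * D y := hD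
    intro x y
    simp only [LinearMap.smul_apply, hD, smul_add, smul_mul_assoc, mul_smul_comm]
  lie_mem' := by
    intro D E hD hE
    replace hD : ∀ x y : A, D (x * y) = D x * y + x * D y := hD
    replace hE : ∀ x y : A, E (x * y) = E x * y + x * E y := hE
    intro x y
    simp only [Ring.lie_def, LinearMap.sub_apply, Module.End.mul_apply, hD, hE, map_add,
      sub_mul, mul_sub]
    abel


namespace SplitQuatDer

open LieAlgebra.SpecialLinear

noncomputable section

abbrev Hs : Type := QuaternionAlgebra ℝ 1 0 (-1)

def qI : Hs := ⟨0,1,0,0⟩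
def qJ : Hs := ⟨0,0,1,0⟩
def qK : Hs := ⟨0,0,0,1⟩

@[simp] lemma qI_re : qI.re = 0 := rfl
@[simp] lemma qI_imI : qI.imI = 1 := rfl
@[simp] lemma qI_imJ : qI.imJ = 0 := rfl
@[simp] lemma qI_imK : qI.imK = 0 := rfl
@[simp] lemma qJ_re : qJ.re = 0 := rfl
@[simp] lemma qJ_imI : qJ.imI = 0 := rfl
@[simp] lemma qJ_imJ : qJ.imJ = 1 := rfl
@[simp] lemma qJ_imK : qJ.imK = 0 := rfl
@[simp] lemma qK_re : qK.re = 0 := rfl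
@[simp] lemma qK_imI : qK.imI = 0 := rfl
@[simp] lemma qK_imJ : qK.imJ = 0 := rfl
@[simp] lemma qK_imK : qK.imK = 1 := rfl

lemma iI : qI * qI = 1 := by ext <;> simp
lemma jJ : qJ * qJ = -1 := by ext <;> simp
lemma iJ_anticomm : qI * qJ + qJ * qI = 0 := by ext <;> simp
lemma iJ : qI * qJ = qK := by ext <;> simp

/-- inner derivation -/
def ad (q : Hs) : Module.End ℝ Hs := LinearMap.mulLeft ℝ q - LinearMap.mulRight ℝ q

lemma ad_apply (q x : Hs) : ad q x = q * x - x * q := rfl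

lemma ad_mem (q : Hs) : ad q ∈ algebraDerivations Hs := by
  intro x y
  simp only [ad_apply]
  noncomm_ring

lemma ad_add (p q : Hs) : ad (p + q) = ad p + ad q := by
  refine LinearMap.ext fun x => ?_
  simp only [ad_apply, LinearMap.add_apply, ad_apply]
  noncomm_ring

lemma ad_smul (t : ℝ) (q : Hs) : ad (t • q) = t • ad q := by
  refine LinearMap.ext fun x => ?_
  simp only [ad_apply, LinearMap.smul_apply, smul_mul_assoc, mul_smul_comm, smul_sub]

lemma ad_comm (p q : Hs) : ad (p * q - q * p) = ⁅ad p, ad q⁆ := by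
  refine LinearMap.ext fun x => ?_
  simp only [ad_apply, Ring.lie_def, LinearMap.sub_apply, Module.End.mul_apply, ad_apply]
  noncomm_ring

/-- the quaternion corresponding to a traceless matrix -/
def qmat (X : sl (Fin 2) ℝ) : Hs :=
  ⟨0, X.val 0 0, (X.val 0 1 - X.val 1 0)/2, (X.val 0 1 + X.val 1 0)/2⟩

lemma qmat_add (X Y : sl (Fin 2) ℝ) : qmat (X + Y) = qmat X + qmat Y := by
  have h : (X + Y).val = X.val + Y.val := rfl
  ext <;> simp [qmat, h, Matrix.add_apply] <;> ring

lemma qmat_smul (t : ℝ) (X : sl (Fin 2) ℝ) : qmat (t • X) = t • qmat X := by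
  have h : (t • X).val = t • X.val := rfl
  ext <;> simp [qmat, h, Matrix.smul_apply, smul_eq_mul] <;> ring

lemma qmat_bracket (X Y : sl (Fin 2) ℝ) :
    qmat ⁅X, Y⁆ = qmat X * qmat Y - qmat Y * qmat X := by
  have htX : X.val 1 1 = -X.val 0 0 := by
    have h : X.val ∈ LinearMap.ker (Matrix.traceLinearMap (Fin 2) ℝ ℝ) := X.property
    rw [LinearMap.mem_ker, Matrix.traceLinearMap_apply, Matrix.trace_fin_two] at h
    linarith
  have htY : Y.val 1 1 = -Y.val 0 0 := by
    have h : Y.val ∈ LinearMap.ker (Matrix.traceLinearMap (Fin 2) ℝ ℝ) := Y.property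
    rw [LinearMap.mem_ker, Matrix.traceLinearMap_apply, Matrix.trace_fin_two] at h
    linarith
  have hb : (⁅X, Y⁆ : sl (Fin 2) ℝ).val = X.val * Y.val - Y.val * X.val := rfl
  ext <;>
    simp [qmat, hb, Matrix.sub_apply, Matrix.mul_apply, Fin.sum_univ_two,
      QuaternionAlgebra.re_mul, QuaternionAlgebra.imI_mul, QuaternionAlgebra.imJ_mul,
      QuaternionAlgebra.imK_mul, htX, htY] <;>
    ring

def toDer (X : sl (Fin 2) ℝ) : algebraDerivations Hs := ⟨ad (qmat X), ad_mem _⟩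

def ofDer (D : algebraDerivations Hs) : sl (Fin 2) ℝ :=
  ⟨!![(D.val qJ).imK/2, (-(D.val qI).imJ - (D.val qI).imK)/2;
      (-(D.val qI).imJ + (D.val qI).imK)/2, -((D.val qJ).imK/2)], by
    show _ ∈ LinearMap.ker (Matrix.traceLinearMap (Fin 2) ℝ ℝ)
    rw [LinearMap.mem_ker, Matrix.traceLinearMap_apply, Matrix.trace_fin_two]
    simp⟩

lemma endo_ext {f g : Module.End ℝ Hs} (h1 : f 1 = g 1) (hi : f qI = g qI)
    (hj : f qJ = g qJ) (hk : f qK = g qK) : f = g := by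
  refine LinearMap.ext fun x => ?_
  have hx : x = x.re • (1 : Hs) + x.imI • qI + x.imJ • qJ + x.imK • qK := by
    ext <;> simp
  rw [hx]
  simp only [map_add, map_smul, h1, hi, hj, hk]

lemma D_one (D : algebraDerivations Hs) : D.val 1 = 0 := by
  have h := D.property 1 (1 : Hs)
  simp only [mul_one, one_mul] at h
  exact (left_eq_add.mp h)

lemma ad_ofDer (D : algebraDerivations Hs) : ad (qmat (ofDer D)) = D.val := by
  have hD : ∀ x y : Hs, D.val (x * y) = D.val x * y + x * D.val y := D.property
  have h1 : D.val 1 = 0 := D_one D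
  have hii : (0 : Hs) = D.val qI * qI + qI * D.val qI := by
    have h := hD qI qI; rw [iI, h1] at h; exact h
  have hjj : (0 : Hs) = D.val qJ * qJ + qJ * D.val qJ := by
    have h := hD qJ qJ; rw [jJ] at h
    rw [show D.val (-1 : Hs) = 0 by rw [map_neg, h1, neg_zero]] at h; exact h
  have hij : (0 : Hs) = D.val qI * qJ + qI * D.val qJ + (D.val qJ * qI + qJ * D.val qI) := by
    have h := hD qI qJ
    have h' := hD qJ qI
    have : D.val (qI * qJ + qJ * qI) = D.val qI * qJ + qI * D.val qJ + (D.val qJ * qI + qJ * D.val qI) := by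
      rw [map_add, h, h']
    rw [iJ_anticomm, map_zero] at this
    exact this
  have hk : D.val qK = D.val qI * qJ + qI * D.val qJ := by
    rw [← iJ]; exact hD qI qJ
  set a := D.val qI with ha
  set b := D.val qJ with hb
  -- component equations
  have e1 : a.re = 0 := by
    have := congrArg QuaternionAlgebra.imI hii
    simp [QuaternionAlgebra.imI_mul] at this
    linarith
  have e2 : a.imI = 0 := by
    have := congrArg QuaternionAlgebra.re hii
    simp [QuaternionAlgebra.re_mul] at this
    linarith
  have e3 : b.re = 0 := by
    have := congrArg QuaternionAlgebra.imJ hjj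
    simp [QuaternionAlgebra.imJ_mul] at this
    linarith
  have e4 : b.imJ = 0 := by
    have := congrArg QuaternionAlgebra.re hjj
    simp [QuaternionAlgebra.re_mul] at this
    linarith
  have e5 : b.imI = a.imJ := by
    have := congrArg QuaternionAlgebra.re hij
    simp [QuaternionAlgebra.re_mul, e1, e2, e3, e4] at this
    linarith
  have hk1 : (D.val qK).re = 0 := by
    have := congrArg QuaternionAlgebra.re hk
    simp [QuaternionAlgebra.re_mul, e1, e2, e3, e4, e5] at this
    linarith
  have hk2 : (D.val qK).imI = -a.imK := by
    have := congrArg QuaternionAlgebra.imI hk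
    simp [QuaternionAlgebra.imI_mul, e1, e2, e3, e4, e5] at this
    linarith
  have hk3 : (D.val qK).imJ = b.imK := by
    have := congrArg QuaternionAlgebra.imJ hk
    simp [QuaternionAlgebra.imJ_mul, e1, e2, e3, e4, e5] at this
    linarith
  have hk4 : (D.val qK).imK = 0 := by
    have := congrArg QuaternionAlgebra.imK hk
    simp [QuaternionAlgebra.imK_mul, e1, e2, e3, e4, e5] at this
    linarith
  apply endo_ext
  · rw [h1]; simp [ad_apply]
  · ext <;>
      simp [ad_apply, qmat, ofDer, QuaternionAlgebra.re_mul, QuaternionAlgebra.imI_mul,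
        QuaternionAlgebra.imJ_mul, QuaternionAlgebra.imK_mul, ← ha, e1, e2] <;> ring
  · ext <;>
      simp [ad_apply, qmat, ofDer, QuaternionAlgebra.re_mul, QuaternionAlgebra.imI_mul,
        QuaternionAlgebra.imJ_mul, QuaternionAlgebra.imK_mul, ← ha, ← hb, e3, e4, e5] <;> ring
  · ext <;>
      simp [ad_apply, qmat, ofDer, QuaternionAlgebra.re_mul, QuaternionAlgebra.imI_mul,
        QuaternionAlgebra.imJ_mul, QuaternionAlgebra.imK_mul, ← ha, ← hb, hk1, hk2, hk3, hk4] <;>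
      ring

lemma ofDer_toDer (X : sl (Fin 2) ℝ) : ofDer (toDer X) = X := by
  have ht : X.val 1 1 = -X.val 0 0 := by
    have h : X.val ∈ LinearMap.ker (Matrix.traceLinearMap (Fin 2) ℝ ℝ) := X.property
    rw [LinearMap.mem_ker, Matrix.traceLinearMap_apply, Matrix.trace_fin_two] at h
    linarith
  apply Subtype.ext
  show (ofDer (toDer X)).val = X.val
  ext i j
  fin_cases i <;> fin_cases j <;>
    simp [ofDer, toDer, ad_apply, qmat, QuaternionAlgebra.imJ_mul, QuaternionAlgebra.imK_mul,
      ht] <;>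
    ring

set_option synthInstance.maxHeartbeats 1000000 in
set_option maxHeartbeats 1000000 in
def sl2ToDer : (sl (Fin 2) ℝ) ≃ₗ⁅ℝ⁆ (algebraDerivations Hs) where
  toFun := toDer
  map_add' X Y := by
    apply Subtype.ext
    show ad (qmat (X + Y)) = ad (qmat X) + ad (qmat Y)
    rw [qmat_add, ad_add]
  map_smul' t X := by
    apply Subtype.ext
    show ad (qmat (t • X)) = t • ad (qmat X)
    rw [qmat_smul, ad_smul]
  map_lie' {X Y} := by
    apply Subtype.ext
    show ad (qmat ⁅X, Y⁆) = ⁅ad (qmat X), ad (qmat Y)⁆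
    rw [qmat_bracket, ad_comm]
  invFun := ofDer
  left_inv := ofDer_toDer
  right_inv D := by
    apply Subtype.ext
    exact ad_ofDer D

end
end SplitQuatDer
/-- The real Lie algebra of ℝ-linear derivations of the split quaternions
(the real quaternion algebra with i² = 1, j² = −1, ij = −ji) is isomorphic to
`sl(2, ℝ)`, the Lie algebra of traceless 2×2 real matrices. -/
theorem derivations_splitQuaternion_iso_sl2 :
    Nonempty ((algebraDerivations (QuaternionAlgebra ℝ 1 0 (-1))) ≃ₗ⁅ℝ⁆
      (LieAlgebra.SpecialLinear.sl (Fin 2) ℝ)) := by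
  exact ⟨SplitQuatDer.sl2ToDer.symm⟩
end

section
/- Every ℝ-linear derivation of the quaternions is skew-adjoint with respect to the standard inner product: if D : ℍ → ℍ is ℝ-linear and satisfies D(xy) = D(x)·y + x·D(y) for all x, y ∈ ℍ, then ⟨D(x), y⟩ + ⟨x, D(y)⟩ = 0 for all x, y ∈ ℍ, where ⟨x, y⟩ = Re(x̄·y). -/
/-- Every ℝ-linear derivation of the quaternions is skew-adjoint with respect to
the standard inner product `⟨x, y⟩ = Re(x̄·y)`. -/
theorem derivation_quaternion_skewAdjoint (D : Quaternion ℝ →ₗ[ℝ] Quaternion ℝ)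
    (hD : ∀ x y : Quaternion ℝ, D (x * y) = D x * y + x * D y) :
    ∀ x y : Quaternion ℝ, (star (D x) * y).re + (star x * D y).re = 0 := by
  -- D 1 = 0
  have h1 : D 1 = 0 := by
    have := hD 1 1
    simp only [mul_one, one_mul] at this
    linear_combination (norm := module) -this
  -- basis elements
  set i : Quaternion ℝ := ⟨0, 1, 0, 0⟩ with hi
  set j : Quaternion ℝ := ⟨0, 0, 1, 0⟩ with hj
  set k : Quaternion ℝ := ⟨0, 0, 0, 1⟩ with hk
  have hii : i * i = -1 := by ext <;> simp only [Quaternion.re_mul, Quaternion.imI_mul, Quaternion.imJ_mul, Quaternion.imK_mul] <;> simp [hi, Quaternion.re_mul, Quaternion.imI_mul,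
    Quaternion.imJ_mul, Quaternion.imK_mul, Quaternion.re_one, Quaternion.imI_one, Quaternion.imJ_one, Quaternion.imK_one]
  have hjj : j * j = -1 := by ext <;> simp only [Quaternion.re_mul, Quaternion.imI_mul, Quaternion.imJ_mul, Quaternion.imK_mul] <;> simp [hj, Quaternion.re_mul, Quaternion.imI_mul,
    Quaternion.imJ_mul, Quaternion.imK_mul, Quaternion.re_one, Quaternion.imI_one, Quaternion.imJ_one, Quaternion.imK_one]
  have hkk : k * k = -1 := by ext <;> simp only [Quaternion.re_mul, Quaternion.imI_mul, Quaternion.imJ_mul, Quaternion.imK_mul] <;> simp [hk, Quaternion.re_mul, Quaternion.imI_mul,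
    Quaternion.imJ_mul, Quaternion.imK_mul, Quaternion.re_one, Quaternion.imI_one, Quaternion.imJ_one, Quaternion.imK_one]
  have hDneg1 : D (-1) = 0 := by rw [map_neg, h1, neg_zero]
  -- re of D on basis vanishes, using the `imI/imJ/imK` component of the square relation
  have hrei : (D i).re = 0 := by
    have := hD i i
    rw [hii, hDneg1] at this
    have h2 := congrArg QuaternionAlgebra.imI this
    rw [Quaternion.imI_add, Quaternion.imI_mul, Quaternion.imI_mul] at h2
    simp [hi, Quaternion.imI_mul, Quaternion.imI_zero] at h2
    linarith
  have hrej : (D j).re = 0 := by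
    have := hD j j
    rw [hjj, hDneg1] at this
    have h2 := congrArg QuaternionAlgebra.imJ this
    rw [Quaternion.imJ_add, Quaternion.imJ_mul, Quaternion.imJ_mul] at h2
    simp [hj, Quaternion.imJ_mul, Quaternion.imJ_zero] at h2
    linarith
  have hrek : (D k).re = 0 := by
    have := hD k k
    rw [hkk, hDneg1] at this
    have h2 := congrArg QuaternionAlgebra.imK this
    rw [Quaternion.imK_add, Quaternion.imK_mul, Quaternion.imK_mul] at h2
    simp [hk, Quaternion.imK_mul, Quaternion.imK_zero] at h2
    linarith
  -- every quaternion decomposes over the basis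
  have hdecomp : ∀ z : Quaternion ℝ,
      z = z.re • (1 : Quaternion ℝ) + z.imI • i + z.imJ • j + z.imK • k := by
    intro z
    ext <;> simp only [Quaternion.re_add, Quaternion.imI_add, Quaternion.imJ_add, Quaternion.imK_add, Quaternion.re_smul, Quaternion.imI_smul, Quaternion.imJ_smul, Quaternion.imK_smul] <;> simp [hi, hj, hk, Quaternion.re_one, Quaternion.imI_one, Quaternion.imJ_one, Quaternion.imK_one]
  have hre : ∀ z : Quaternion ℝ, (D z).re = 0 := by
    intro z
    rw [hdecomp z]
    simp [map_add, map_smul, h1, hrei, hrej, hrek]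
  -- D commutes with star
  have hstar : ∀ z : Quaternion ℝ, star (D z) = D (star z) := by
    intro z
    rw [Quaternion.star_eq_two_re_sub (D z), Quaternion.star_eq_two_re_sub z]
    have hc : ((2 * z.re : ℝ) : Quaternion ℝ) = (2 * z.re) • (1 : Quaternion ℝ) := by
      ext <;> simp [Quaternion.re_one, Quaternion.imI_one, Quaternion.imJ_one, Quaternion.imK_one]
    have hc2 : ((2 * (D z).re : ℝ) : Quaternion ℝ) = 0 := by
      rw [hre z]; simp
    rw [hc2, hc, map_sub, map_smul, h1, smul_zero, zero_sub]
  intro x y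
  have key : (D (star x * y)).re = 0 := hre _
  rw [hD (star x) y] at key
  rw [hstar x]
  simpa [Quaternion.re_add] using key
end

section
/- An ℝ-linear endomorphism f of the quaternions ℍ is skew-adjoint with respect to the inner product ⟨x, y⟩ = Re(x̄·y) (i.e. ⟨f(x), y⟩ + ⟨x, f(y)⟩ = 0 for all x, y) if and only if there exist purely imaginary quaternions p and q such that f(x) = p·x + x·q for all x ∈ ℍ; moreover such p and q are uniquely determined by f. -/
private noncomputable def qI : Quaternion ℝ := ⟨0,1,0,0⟩
private noncomputable def qJ : Quaternion ℝ := ⟨0,0,1,0⟩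
private noncomputable def qK : Quaternion ℝ := ⟨0,0,0,1⟩

private abbrev QA := QuaternionAlgebra ℝ (-1) 0 (-1)

private lemma lq_re_mr (a : (Quaternion ℝ)) (b : QA) : (@HMul.hMul (Quaternion ℝ) (Quaternion ℝ) (Quaternion ℝ) _ a b).re =
    a.re * b.re - a.imI * b.imI - a.imJ * b.imJ - a.imK * b.imK := Quaternion.re_mul a b
private lemma lq_imI_mr (a : (Quaternion ℝ)) (b : QA) : (@HMul.hMul (Quaternion ℝ) (Quaternion ℝ) (Quaternion ℝ) _ a b).imI =
    a.re * b.imI + a.imI * b.re + a.imJ * b.imK - a.imK * b.imJ := Quaternion.imI_mul a b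
private lemma lq_imJ_mr (a : (Quaternion ℝ)) (b : QA) : (@HMul.hMul (Quaternion ℝ) (Quaternion ℝ) (Quaternion ℝ) _ a b).imJ =
    a.re * b.imJ - a.imI * b.imK + a.imJ * b.re + a.imK * b.imI := Quaternion.imJ_mul a b
private lemma lq_imK_mr (a : (Quaternion ℝ)) (b : QA) : (@HMul.hMul (Quaternion ℝ) (Quaternion ℝ) (Quaternion ℝ) _ a b).imK =
    a.re * b.imK + a.imI * b.imJ - a.imJ * b.imI + a.imK * b.re := Quaternion.imK_mul a b
private lemma lq_re_ml (a : QA) (b : (Quaternion ℝ)) : (@HMul.hMul (Quaternion ℝ) (Quaternion ℝ) (Quaternion ℝ) _ a b).re =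
    a.re * b.re - a.imI * b.imI - a.imJ * b.imJ - a.imK * b.imK := Quaternion.re_mul a b
private lemma lq_imI_ml (a : QA) (b : (Quaternion ℝ)) : (@HMul.hMul (Quaternion ℝ) (Quaternion ℝ) (Quaternion ℝ) _ a b).imI =
    a.re * b.imI + a.imI * b.re + a.imJ * b.imK - a.imK * b.imJ := Quaternion.imI_mul a b
private lemma lq_imJ_ml (a : QA) (b : (Quaternion ℝ)) : (@HMul.hMul (Quaternion ℝ) (Quaternion ℝ) (Quaternion ℝ) _ a b).imJ =
    a.re * b.imJ - a.imI * b.imK + a.imJ * b.re + a.imK * b.imI := Quaternion.imJ_mul a b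
private lemma lq_imK_ml (a : QA) (b : (Quaternion ℝ)) : (@HMul.hMul (Quaternion ℝ) (Quaternion ℝ) (Quaternion ℝ) _ a b).imK =
    a.re * b.imK + a.imI * b.imJ - a.imJ * b.imI + a.imK * b.re := Quaternion.imK_mul a b
private lemma lq_re_st (a : QA) : (@star (Quaternion ℝ) _ a).re = a.re := Quaternion.re_star a
private lemma lq_imI_st (a : QA) : (@star (Quaternion ℝ) _ a).imI = -a.imI := Quaternion.imI_star a
private lemma lq_imJ_st (a : QA) : (@star (Quaternion ℝ) _ a).imJ = -a.imJ := Quaternion.imJ_star a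
private lemma lq_imK_st (a : QA) : (@star (Quaternion ℝ) _ a).imK = -a.imK := Quaternion.imK_star a
private lemma lq_re_sm (s : ℝ) (a : QA) : (@HSMul.hSMul ℝ (Quaternion ℝ) (Quaternion ℝ) _ s a).re = s * a.re := rfl
private lemma lq_imI_sm (s : ℝ) (a : QA) : (@HSMul.hSMul ℝ (Quaternion ℝ) (Quaternion ℝ) _ s a).imI = s * a.imI := rfl
private lemma lq_imJ_sm (s : ℝ) (a : QA) : (@HSMul.hSMul ℝ (Quaternion ℝ) (Quaternion ℝ) _ s a).imJ = s * a.imJ := rfl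
private lemma lq_imK_sm (s : ℝ) (a : QA) : (@HSMul.hSMul ℝ (Quaternion ℝ) (Quaternion ℝ) _ s a).imK = s * a.imK := rfl

private lemma qdecomp (x : Quaternion ℝ) :
    x = x.re • 1 + x.imI • qI + x.imJ • qJ + x.imK • qK := by
  ext <;> simp [qI, qJ, qK, Quaternion.re_one, Quaternion.imI_one, Quaternion.imJ_one,
    Quaternion.imK_one, Quaternion.re_smul,
    lq_re_sm, lq_imI_sm, lq_imJ_sm, lq_imK_sm]

/-- An ℝ-linear endomorphism of the quaternions is skew-adjoint w.r.t.
`⟨x, y⟩ = Re(x̄·y)` iff it is of the form `x ↦ p·x + x·q` for a unique pair of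
purely imaginary quaternions `(p, q)`. -/
theorem skewAdjoint_quaternion_iff (f : Quaternion ℝ →ₗ[ℝ] Quaternion ℝ) :
    (∀ x y : Quaternion ℝ, (star (f x) * y).re + (star x * f y).re = 0) ↔
      ∃! pq : Quaternion ℝ × Quaternion ℝ, pq.1.re = 0 ∧ pq.2.re = 0 ∧
        ∀ x : Quaternion ℝ, f x = pq.1 * x + x * pq.2 := by
  have hfx : ∀ x : Quaternion ℝ,
      f x = x.re • f 1 + x.imI • f qI + x.imJ • f qJ + x.imK • f qK := by
    intro x
    conv_lhs => rw [qdecomp x]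
    simp
  constructor
  · intro h
    have h00 := h 1 1
    have h01 := h 1 qI
    have h02 := h 1 qJ
    have h03 := h 1 qK
    have h11 := h qI qI
    have h12 := h qI qJ
    have h13 := h qI qK
    have h22 := h qJ qJ
    have h23 := h qJ qK
    have h33 := h qK qK
    simp only [qI, qJ, qK, lq_re_mr, lq_imI_mr, lq_imJ_mr, lq_imK_mr, lq_re_ml, lq_imI_ml, lq_imJ_ml, lq_imK_ml,
      lq_re_st, lq_imI_st, lq_imJ_st, lq_imK_st, Quaternion.re_mul, Quaternion.re_star, Quaternion.imI_star,
      Quaternion.imJ_star, Quaternion.imK_star, Quaternion.re_one, Quaternion.imI_one,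
      Quaternion.imJ_one, Quaternion.imK_one, mul_zero, mul_one, zero_mul, one_mul,
      add_zero, zero_add, sub_zero, zero_sub, neg_neg, neg_zero]
      at h00 h01 h02 h03 h11 h12 h13 h22 h23 h33
    set a := f 1 with ha
    set b := f (⟨0,1,0,0⟩ : Quaternion ℝ) with hb
    set c := f (⟨0,0,1,0⟩ : Quaternion ℝ) with hc
    set d := f (⟨0,0,0,1⟩ : Quaternion ℝ) with hd
    have E1 : a.re = 0 := by linarith
    have E2 : b.re = -a.imI := by linarith
    have E3 : c.re = -a.imJ := by linarith
    have E4 : d.re = -a.imK := by linarith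
    have E5 : b.imI = 0 := by linarith
    have E6 : c.imI = -b.imJ := by linarith
    have E7 : d.imI = -b.imK := by linarith
    have E8 : c.imJ = 0 := by linarith
    have E9 : d.imJ = -c.imK := by linarith
    have E10 : d.imK = 0 := by linarith
    refine ⟨⟨⟨0, (a.imI + c.imK)/2, (a.imJ - b.imK)/2, (a.imK + b.imJ)/2⟩,
             ⟨0, (a.imI - c.imK)/2, (a.imJ + b.imK)/2, (a.imK - b.imJ)/2⟩⟩,
           ⟨rfl, rfl, ?_⟩, ?_⟩
    · intro x
      rw [hfx x]
      simp only [qI, qJ, qK, ← ha, ← hb, ← hc, ← hd]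
      ext <;>
        · simp only [Quaternion.re_add, Quaternion.imI_add, Quaternion.imJ_add,
            Quaternion.imK_add, Quaternion.re_smul, Quaternion.imI_smul, Quaternion.imJ_smul,
            Quaternion.imK_smul, Quaternion.re_mul, Quaternion.imI_mul, Quaternion.imJ_mul,
            Quaternion.imK_mul, lq_re_mr, lq_imI_mr, lq_imJ_mr, lq_imK_mr, lq_re_ml, lq_imI_ml, lq_imJ_ml, lq_imK_ml,
              smul_eq_mul, E1, E2, E3, E4, E5, E6, E7, E8, E9, E10]
          ring
    · rintro ⟨p', q'⟩ ⟨hp', hq', hf'⟩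
      have e1 := hf' 1
      have e2 := hf' qI
      have e3 := hf' qJ
      rw [hfx 1] at e1
      rw [hfx qI] at e2
      rw [hfx qJ] at e3
      simp only [qI, qJ, qK, ← ha, ← hb, ← hc, ← hd] at e1 e2 e3
      have c2 := congrArg QuaternionAlgebra.imI e1
      have c3 := congrArg QuaternionAlgebra.imJ e1
      have c4 := congrArg QuaternionAlgebra.imK e1
      have c5 := congrArg QuaternionAlgebra.imJ e2
      have c6 := congrArg QuaternionAlgebra.imK e2
      have c7 := congrArg QuaternionAlgebra.imK e3
      simp only [Quaternion.re_add, Quaternion.imI_add, Quaternion.imJ_add, Quaternion.imK_add,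
        Quaternion.re_smul, Quaternion.imI_smul, Quaternion.imJ_smul, Quaternion.imK_smul,
        Quaternion.re_mul, Quaternion.imI_mul, Quaternion.imJ_mul, Quaternion.imK_mul,
        Quaternion.re_one, Quaternion.imI_one, Quaternion.imJ_one, Quaternion.imK_one,
        lq_re_mr, lq_imI_mr, lq_imJ_mr, lq_imK_mr, lq_re_ml, lq_imI_ml, lq_imJ_ml, lq_imK_ml,
        smul_eq_mul, hp', hq', mul_zero, mul_one, zero_mul, one_mul,
        add_zero, zero_add, sub_zero, zero_sub, neg_neg, neg_zero] at c2 c3 c4 c5 c6 c7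
      have hp2 : p'.re = 0 := hp'
      have hq2 : q'.re = 0 := hq'
      rw [Prod.ext_iff]
      refine ⟨QuaternionAlgebra.ext (show p'.re = 0 from hp2)
          (show p'.imI = (a.imI + c.imK)/2 by linarith)
          (show p'.imJ = (a.imJ - b.imK)/2 by linarith)
          (show p'.imK = (a.imK + b.imJ)/2 by linarith),
        QuaternionAlgebra.ext (show q'.re = 0 from hq2)
          (show q'.imI = (a.imI - c.imK)/2 by linarith)
          (show q'.imJ = (a.imJ + b.imK)/2 by linarith)
          (show q'.imK = (a.imK - b.imJ)/2 by linarith)⟩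
  · rintro ⟨⟨p, q⟩, ⟨hp, hq, hf⟩, -⟩ x y
    have hp' : p.re = 0 := hp
    have hq' : q.re = 0 := hq
    rw [hf x, hf y]
    simp only [Quaternion.re_mul, Quaternion.re_add, Quaternion.imI_add, Quaternion.imJ_add,
      Quaternion.imK_add, Quaternion.re_star, Quaternion.imI_star, Quaternion.imJ_star,
      Quaternion.imK_star, Quaternion.imI_mul, Quaternion.imJ_mul, Quaternion.imK_mul, hp', hq']
    ring
end

section
/- The triality algebra of ℂ is two-dimensional and abelian: the set of triples (A, B, C) of ℝ-linear endomorphisms of ℂ such that each of A, B, C is skew-adjoint with respect to the inner product ⟨x, y⟩ = Re(x̄·y) and A(xy) = B(x)·y + x·C(y) holds for all x, y ∈ ℂ, is a real Lie subalgebra (under componentwise commutator) of dimension 2 over ℝ on which the Lie bracket vanishes identically. -/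
open Complex

attribute [local instance 100] LieRing.ofAssociativeRing

noncomputable def Jc : Module.End ℝ ℂ := LinearMap.mulLeft ℝ Complex.I
lemma Jc_apply (x : ℂ) : Jc x = Complex.I * x := rfl

lemma skew_smul_Jc (t : ℝ) (x y : ℂ) :
    (star ((t • Jc) x) * y).re + (star x * (t • Jc) y).re = 0 := by
  simp [Jc_apply, Complex.mul_re, Complex.mul_im]
  ring

lemma skew_eq_smul_Jc (f : Module.End ℝ ℂ)
    (h : ∀ x y : ℂ, (star (f x) * y).re + (star x * f y).re = 0) :
    f = (f 1).im • Jc := by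
  have h11 := h 1 1
  have hII := h Complex.I Complex.I
  have h1I := h 1 Complex.I
  simp [Complex.mul_re] at h11 hII h1I
  have hre : (f 1).re = 0 := by linarith
  have hIim : (f Complex.I).im = 0 := by linarith
  have hIre : (f Complex.I).re = -(f 1).im := by linarith
  apply LinearMap.ext
  intro x
  have hx : x = x.re • (1:ℂ) + x.im • Complex.I := by
    rw [Complex.real_smul, Complex.real_smul, mul_one]
    exact (Complex.re_add_im x).symm
  rw [hx]
  simp only [map_add, map_smul, LinearMap.smul_apply, Jc_apply]
  apply Complex.ext <;>
    simp [Complex.mul_re, Complex.mul_im, hre, hIim, hIre]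

noncomputable def e1 : Module.End ℝ ℂ × Module.End ℝ ℂ × Module.End ℝ ℂ := (Jc, Jc, 0)
noncomputable def e2 : Module.End ℝ ℂ × Module.End ℝ ℂ × Module.End ℝ ℂ := (Jc, 0, Jc)

noncomputable def S : Submodule ℝ (Module.End ℝ ℂ × Module.End ℝ ℂ × Module.End ℝ ℂ) :=
  Submodule.span ℝ {e1, e2}

lemma mem_S_form {T : Module.End ℝ ℂ × Module.End ℝ ℂ × Module.End ℝ ℂ} (hT : T ∈ S) :
    ∃ b c : ℝ, T = ((b + c) • Jc, b • Jc, c • Jc) := by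
  refine Submodule.span_induction (p := fun T _ => ∃ b c : ℝ, T = ((b + c) • Jc, b • Jc, c • Jc))
    ?_ ?_ ?_ ?_ hT
  · rintro x (rfl | rfl)
    · exact ⟨1, 0, by simp [e1, Prod.ext_iff]⟩
    · exact ⟨0, 1, by simp [e2, Prod.ext_iff]⟩
  · exact ⟨0, 0, by simp [Prod.ext_iff]⟩
  · rintro x y _ _ ⟨b, c, rfl⟩ ⟨b', c', rfl⟩
    exact ⟨b + b', c + c', by simp [Prod.ext_iff, add_smul]; module⟩
  · rintro r x _ ⟨b, c, rfl⟩
    exact ⟨r * b, r * c, by simp [Prod.ext_iff, mul_smul]; module⟩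

lemma bracket_smul_Jc (t s : ℝ) : ⁅t • Jc, s • Jc⁆ = 0 := by
  rw [smul_lie, lie_smul, lie_self, smul_zero, smul_zero]

/-- The triality algebra of ℂ: the triples (A, B, C) of skew-adjoint ℝ-linear
endomorphisms of ℂ with A(xy) = B(x)·y + x·C(y) form a real Lie subalgebra
(under componentwise commutator) of dimension 2 with identically vanishing
bracket. -/
theorem triality_complex_two_dim_abelian :
    ∃ L : LieSubalgebra ℝ (Module.End ℝ ℂ × Module.End ℝ ℂ × Module.End ℝ ℂ),
      (L : Set (Module.End ℝ ℂ × Module.End ℝ ℂ × Module.End ℝ ℂ)) =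
        {T | (∀ x y : ℂ, (star (T.1 x) * y).re + (star x * T.1 y).re = 0) ∧
             (∀ x y : ℂ, (star (T.2.1 x) * y).re + (star x * T.2.1 y).re = 0) ∧
             (∀ x y : ℂ, (star (T.2.2 x) * y).re + (star x * T.2.2 y).re = 0) ∧
             (∀ x y : ℂ, T.1 (x * y) = T.2.1 x * y + x * T.2.2 y)} ∧
      Module.finrank ℝ L = 2 ∧
      (∀ a b : L, ⁅a, b⁆ = 0) := by
  refine ⟨⟨S, ?_⟩, ?_, ?_, ?_⟩
  · -- lie closure
    intro x y hx hy
    obtain ⟨b, c, rfl⟩ := mem_S_form hx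
    obtain ⟨b', c', rfl⟩ := mem_S_form hy
    have : (⁅((b+c) • Jc, b • Jc, c • Jc), ((b'+c') • Jc, b' • Jc, c' • Jc)⁆ :
        Module.End ℝ ℂ × Module.End ℝ ℂ × Module.End ℝ ℂ) = 0 := by
      ext1
      · exact bracket_smul_Jc _ _
      · ext1
        · exact bracket_smul_Jc _ _
        · exact bracket_smul_Jc _ _
    rw [this]
    exact S.zero_mem
  · -- set equality
    ext T
    constructor
    · rintro hT
      obtain ⟨b, c, rfl⟩ := mem_S_form hT
      refine ⟨skew_smul_Jc _, skew_smul_Jc _, skew_smul_Jc _, fun x y => ?_⟩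
      simp only [LinearMap.smul_apply, Jc_apply]
      rw [Complex.real_smul, Complex.real_smul, Complex.real_smul]
      push_cast
      ring
    · rintro ⟨hA, hB, hC, hT⟩
      have eA := skew_eq_smul_Jc _ hA
      have eB := skew_eq_smul_Jc _ hB
      have eC := skew_eq_smul_Jc _ hC
      set a := (T.1 1).im
      set b := (T.2.1 1).im
      set c := (T.2.2 1).im
      have habc : a = b + c := by
        have := hT 1 1
        rw [mul_one, eA, eB, eC] at this
        simp only [LinearMap.smul_apply, Jc_apply, mul_one, one_mul] at this
        have := congrArg Complex.im this
        simpa using this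
      have hTeq : T = b • e1 + c • e2 := by
        have h1 : T.1 = (b + c) • Jc := by rw [eA, habc]
        refine Prod.ext ?_ (Prod.ext ?_ ?_)
        · simp [e1, e2, h1, add_smul]
        · simp [e1, e2, eB]
        · simp [e1, e2, eC]
      rw [hTeq]
      exact S.add_mem (S.smul_mem _ (Submodule.subset_span (by simp)))
        (S.smul_mem _ (Submodule.subset_span (by simp)))
  · -- finrank
    have hli : LinearIndependent ℝ ![e1, e2] := by
      rw [LinearIndependent.pair_iff]
      intro s t hst
      have h' := hst
      simp only [e1, e2, Prod.smul_mk, Prod.mk_add_mk, Prod.mk_eq_zero, smul_zero,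
        add_zero, zero_add] at h'
      have h2 : s • Jc = 0 := h'.2.1
      have h3 : t • Jc = 0 := h'.2.2
      constructor
      · have := congrArg (fun f : Module.End ℝ ℂ => (f 1).im) h2
        simpa [Jc_apply] using this
      · have := congrArg (fun f : Module.End ℝ ℂ => (f 1).im) h3
        simpa [Jc_apply] using this
    have : Module.finrank ℝ S = 2 := by
      have hsp : S = Submodule.span ℝ (Set.range ![e1, e2]) := by
        have hr : Set.range ![e1, e2] = {e1, e2} := by
          ext z; simp [Fin.exists_fin_two]; tauto
        rw [hr]; rfl
      rw [hsp, finrank_span_eq_card hli]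
      simp
    exact this
  · -- abelian
    rintro ⟨x, hx⟩ ⟨y, hy⟩
    obtain ⟨b, c, hxe⟩ := mem_S_form hx
    obtain ⟨b', c', hye⟩ := mem_S_form hy
    apply Subtype.ext
    show (⁅x, y⁆ : Module.End ℝ ℂ × Module.End ℝ ℂ × Module.End ℝ ℂ) = 0
    subst hxe hye
    ext1
    · exact bracket_smul_Jc _ _
    · ext1
      · exact bracket_smul_Jc _ _
      · exact bracket_smul_Jc _ _
end
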